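/- arXiv:1607.06176 — 3 statements merged into one kernel-verified Lean document; each statement's English description precedes it below -/
import Mathlib

section
/- Let u, v be real-valued functions on V_m, let ũ : V_{m+1} → ℝ be the harmonic (1/5–2/5) extension of u, i.e. ũ restricted to V_m equals u and for every word ω ∈ {1,2,3}^m and every permutation (i,j,k) of (1,2,3), ũ(P_ω(P_i(q_j))) = (2/5)u(P_ω(q_i)) + (2/5)u(P_ω(q_j)) + (1/5)u(P_ω(q_k)); and let v′ : V_{m+1} → ℝ be any extension of v (i.e. v′ restricted to V_m equals v). Then E_{m+1}(ũ, v′) = E_m(u, v). -/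
open Finset Filter

noncomputable section

/-- Points in the plane. -/
abbrev Pt := Fin 2 → ℝ

/-- The three contraction maps `P_i(x) = (x + q_i)/2`. -/
def Pmap (q : Fin 3 → Pt) (i : Fin 3) (x : Pt) : Pt := (x + q i) / 2

/-- `Pw q m ω = P_{ω 0} ∘ P_{ω 1} ∘ ⋯ ∘ P_{ω (m-1)}` for a word `ω` of length `m`. -/
def Pw (q : Fin 3 → Pt) : (m : ℕ) → (Fin m → Fin 3) → Pt → Pt
  | 0, _, x => x
  | m + 1, ω, x => Pmap q (ω 0) (Pw q m (fun k => ω k.succ) x)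

/-- The level-`m` vertex set `V_m`. -/
def V (q : Fin 3 → Pt) (m : ℕ) : Set Pt :=
  {x | ∃ ω : Fin m → Fin 3, ∃ i : Fin 3, x = Pw q m ω (q i)}

/-- `V_* = ⋃ m, V_m`. -/
def Vstar (q : Fin 3 → Pt) : Set Pt := ⋃ m, V q m

/-- The Sierpinski gasket, as the closure of `V_*`. -/
def SG (q : Fin 3 → Pt) : Set Pt := closure (Vstar q)

/-- The level-`m` graph energy. -/
def energy (q : Fin 3 → Pt) (m : ℕ) (u : Pt → ℝ) : ℝ :=
  (5/3 : ℝ)^m * ∑ ω : Fin m → Fin 3,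
    ∑ p ∈ Finset.univ.filter (fun p : Fin 3 × Fin 3 => p.1 < p.2),
      (u (Pw q m ω (q p.1)) - u (Pw q m ω (q p.2)))^2

/-- The level-`m` bilinear graph energy. -/
def energyBil (q : Fin 3 → Pt) (m : ℕ) (u v : Pt → ℝ) : ℝ :=
  (5/3 : ℝ)^m * ∑ ω : Fin m → Fin 3,
    ∑ p ∈ Finset.univ.filter (fun p : Fin 3 × Fin 3 => p.1 < p.2),
      (u (Pw q m ω (q p.1)) - u (Pw q m ω (q p.2))) *
        (v (Pw q m ω (q p.1)) - v (Pw q m ω (q p.2)))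

open scoped Classical in
/-- The level-`m` graph Laplacian at `x`. -/
def graphLap (q : Fin 3 → Pt) (m : ℕ) (u : Pt → ℝ) (x : Pt) : ℝ :=
  ∑ ω : Fin m → Fin 3,
    ∑ p ∈ Finset.univ.filter (fun p : Fin 3 × Fin 3 => p.1 ≠ p.2 ∧ Pw q m ω (q p.1) = x),
      (u (Pw q m ω (q p.2)) - u x)

/-- A function is harmonic on `SG` if it is continuous on `SG` and satisfies
the `1/5-2/5` rule. -/
def IsHarmonic (q : Fin 3 → Pt) (h : Pt → ℝ) : Prop :=
  ContinuousOn h (SG q) ∧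
  ∀ (m : ℕ) (ω : Fin m → Fin 3) (i j k : Fin 3), i ≠ j → j ≠ k → i ≠ k →
    h (Pw q m ω (Pmap q i (q j))) =
      2/5 * h (Pw q m ω (q i)) + 2/5 * h (Pw q m ω (q j)) + 1/5 * h (Pw q m ω (q k))

/-- `f` is a fractal interpolation function on `SG` with vertical scaling factors `d i`. -/
def IsFIF (q : Fin 3 → Pt) (d : Fin 3 → ℝ) (f : Pt → ℝ) : Prop :=
  ContinuousOn f (SG q) ∧
  ∃ h : Fin 3 → Pt → ℝ, (∀ i, IsHarmonic q (h i)) ∧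
    ∀ i, ∀ x ∈ SG q, f (Pmap q i x) = d i * f x + h i x


lemma Pmap_self (q : Fin 3 → Pt) (i : Fin 3) : Pmap q i (q i) = q i := by
  funext t
  simp only [Pmap, Pi.div_apply, Pi.add_apply]
  norm_num

lemma Pmap_comm (q : Fin 3 → Pt) (i j : Fin 3) : Pmap q i (q j) = Pmap q j (q i) := by
  simp [Pmap, add_comm]

lemma Pw_snoc (q : Fin 3 → Pt) : ∀ (m : ℕ) (σ : Fin m → Fin 3) (i : Fin 3) (x : Pt),
    Pw q (m+1) (Fin.snoc σ i) x = Pw q m σ (Pmap q i x) := by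
  intro m
  induction m with
  | zero => intro σ i x; simp [Pw, Fin.snoc]
  | succ n ih =>
    intro σ i x
    have step : ∀ (M : ℕ) (ω : Fin (M+1) → Fin 3) (y : Pt),
        Pw q (M+1) ω y = Pmap q (ω 0) (Pw q M (fun k => ω k.succ) y) :=
      fun M ω y => rfl
    rw [step (n+1) (Fin.snoc σ i) x]
    have h1 : (Fin.snoc σ i : Fin (n+2) → Fin 3) 0 = σ 0 := by
      have h0 : (0 : Fin (n+2)) = Fin.castSucc 0 := rfl
      rw [h0, Fin.snoc_castSucc]
    have h2 : (fun k : Fin (n+1) => (Fin.snoc σ i : Fin (n+2) → Fin 3) k.succ)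
        = Fin.snoc (fun k : Fin n => σ k.succ) i := by
      funext k
      refine Fin.lastCases ?_ ?_ k
      · have : (Fin.last n).succ = Fin.last (n+1) := rfl
        rw [this, Fin.snoc_last, Fin.snoc_last]
      · intro j
        have : (Fin.castSucc j).succ = Fin.castSucc j.succ := rfl
        rw [this, Fin.snoc_castSucc, Fin.snoc_castSucc]
    rw [h1, h2, ih, ← step n σ]

lemma sum_pairs3 (f : Fin 3 × Fin 3 → ℝ) :
    ∑ p ∈ Finset.univ.filter (fun p : Fin 3 × Fin 3 => p.1 < p.2), f p
      = f (0,1) + f (0,2) + f (1,2) := by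
  have hfil : (Finset.univ.filter (fun p : Fin 3 × Fin 3 => p.1 < p.2))
      = {((0:Fin 3),(1:Fin 3)), (0,2), (1,2)} := by decide
  rw [hfil, Finset.sum_insert (by decide), Finset.sum_insert (by decide),
    Finset.sum_singleton]
  ring

/-- The equivalence `(Fin m → Fin 3) × Fin 3 ≃ (Fin (m+1) → Fin 3)` via `snoc`. -/
def snocEquiv3 (m : ℕ) : ((Fin m → Fin 3) × Fin 3) ≃ (Fin (m+1) → Fin 3) where
  toFun p := Fin.snoc p.1 p.2
  invFun ω := (fun k => ω k.castSucc, ω (Fin.last m))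
  left_inv p := by
    ext k
    · simp
    · simp
  right_inv ω := by
    funext k
    refine Fin.lastCases ?_ ?_ k
    · simp
    · intro j; simp

/-- the bilinear energy of a harmonic extension against any extension
is unchanged: `E_{m+1}(ũ, v′) = E_m(u, v)`. -/
theorem stmt_0 (q : Fin 3 → Pt) (hq : AffineIndependent ℝ q) (m : ℕ)
    (u v utilde v' : Pt → ℝ)
    (hu : ∀ x ∈ V q m, utilde x = u x)
    (hharm : ∀ (ω : Fin m → Fin 3) (i j k : Fin 3), i ≠ j → j ≠ k → i ≠ k →
      utilde (Pw q m ω (Pmap q i (q j))) =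
        2/5 * u (Pw q m ω (q i)) + 2/5 * u (Pw q m ω (q j)) + 1/5 * u (Pw q m ω (q k)))
    (hv : ∀ x ∈ V q m, v' x = v x) :
    energyBil q (m+1) utilde v' = energyBil q m u v := by
  classical
  have key : ∀ σ : Fin m → Fin 3,
      (∑ i : Fin 3, ∑ p ∈ Finset.univ.filter (fun p : Fin 3 × Fin 3 => p.1 < p.2),
        (utilde (Pw q m σ (Pmap q i (q p.1))) - utilde (Pw q m σ (Pmap q i (q p.2)))) *
          (v' (Pw q m σ (Pmap q i (q p.1))) - v' (Pw q m σ (Pmap q i (q p.2))))) =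
      (3/5) * ∑ p ∈ Finset.univ.filter (fun p : Fin 3 × Fin 3 => p.1 < p.2),
        (u (Pw q m σ (q p.1)) - u (Pw q m σ (q p.2))) *
          (v (Pw q m σ (q p.1)) - v (Pw q m σ (q p.2))) := by
    intro σ
    rw [Fin.sum_univ_three]
    rw [sum_pairs3, sum_pairs3, sum_pairs3, sum_pairs3]
    have e10 : Pmap q 1 (q 0) = Pmap q 0 (q 1) := Pmap_comm q 1 0
    have e20 : Pmap q 2 (q 0) = Pmap q 0 (q 2) := Pmap_comm q 2 0
    have e21 : Pmap q 2 (q 1) = Pmap q 1 (q 2) := Pmap_comm q 2 1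
    rw [Pmap_self q 0, Pmap_self q 1, Pmap_self q 2, e10, e20, e21]
    rw [hharm σ 0 1 2 (by decide) (by decide) (by decide),
      hharm σ 0 2 1 (by decide) (by decide) (by decide),
      hharm σ 1 2 0 (by decide) (by decide) (by decide)]
    rw [hu _ ⟨σ, 0, rfl⟩, hu _ ⟨σ, 1, rfl⟩, hu _ ⟨σ, 2, rfl⟩,
      hv _ ⟨σ, 0, rfl⟩, hv _ ⟨σ, 1, rfl⟩, hv _ ⟨σ, 2, rfl⟩]
    ring
  unfold energyBil
  rw [← Equiv.sum_comp (snocEquiv3 m)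
    (fun ω => ∑ p ∈ Finset.univ.filter (fun p : Fin 3 × Fin 3 => p.1 < p.2),
      (utilde (Pw q (m+1) ω (q p.1)) - utilde (Pw q (m+1) ω (q p.2))) *
        (v' (Pw q (m+1) ω (q p.1)) - v' (Pw q (m+1) ω (q p.2))))]
  rw [Fintype.sum_prod_type]
  have hsn : ∀ (σ : Fin m → Fin 3) (i : Fin 3) (x : Pt),
      Pw q (m+1) (snocEquiv3 m (σ, i)) x = Pw q m σ (Pmap q i x) := by
    intro σ i x
    exact Pw_snoc q m σ i x
  simp only [hsn]
  rw [Finset.sum_comm]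
  have : (∑ i : Fin 3, ∑ σ : Fin m → Fin 3,
      ∑ p ∈ Finset.univ.filter (fun p : Fin 3 × Fin 3 => p.1 < p.2),
        (utilde (Pw q m σ (Pmap q i (q p.1))) - utilde (Pw q m σ (Pmap q i (q p.2)))) *
          (v' (Pw q m σ (Pmap q i (q p.1))) - v' (Pw q m σ (Pmap q i (q p.2)))))
      = ∑ σ : Fin m → Fin 3, (3/5) *
        ∑ p ∈ Finset.univ.filter (fun p : Fin 3 × Fin 3 => p.1 < p.2),
          (u (Pw q m σ (q p.1)) - u (Pw q m σ (q p.2))) *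
            (v (Pw q m σ (q p.1)) - v (Pw q m σ (q p.2))) := by
    rw [Finset.sum_comm]
    exact Finset.sum_congr rfl fun σ _ => key σ
  rw [this, ← Finset.mul_sum, pow_succ]
  ring

end
end

section
/- Let f be an FIF on SG with uniform vertical scaling factor d, where d ≠ 3/5. Then for every nonnegative integer m, Δ_{m+1}f(P_1(q_2)) = (d·(Δ₁²f(q₂) + Δ₁¹f(q₁) + (3/5)·Δ₀f(q₃))/(3/5 − d))·((3/5)^m − d^m) + Δ₁f(P_1(q_2))·(3/5)^m, where Δ₀f(q₃) = f(q₁) + f(q₂) − 2f(q₃), Δ₁ⁱf(q_i) = f(P_i(q_j)) + f(P_i(q_k)) − 2f(q_i) for {i,j,k} = {1,2,3}, and Δ₁f(P_1(q_2)) = f(q₁) + f(P_1(q_3)) + f(q₂) + f(P_2(q_3)) − 4f(P_1(q_2)). -/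
open Finset Filter

noncomputable section

variable (q : Fin 3 → Pt)

lemma Pmap_eq_midpoint (a : Fin 3) (x : Pt) : Pmap q a x = midpoint ℝ x (q a) := by
  funext j
  rw [midpoint_eq_smul_add]
  simp [Pmap]
  ring

lemma coord_Pmap (c : Pt →ᵃ[ℝ] ℝ) (a : Fin 3) (x : Pt) :
    c (Pmap q a x) = (c x + c (q a)) / 2 := by
  rw [Pmap_eq_midpoint, AffineMap.map_midpoint, midpoint_eq_smul_add, smul_eq_mul,
    invOf_eq_inv]
  ring

lemma Pmap_injective (a : Fin 3) : Function.Injective (Pmap q a) := by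
  intro x y hxy
  funext j
  have h2 := congrFun hxy j
  simp only [Pmap, Pi.div_apply, Pi.add_apply, Pi.ofNat_apply] at h2
  linarith

lemma Pmap_fix (a : Fin 3) : Pmap q a (q a) = q a := by
  funext j
  simp only [Pmap, Pi.div_apply, Pi.add_apply, Pi.ofNat_apply]
  ring

lemma Pmap_comm01 : Pmap q 0 (q 1) = Pmap q 1 (q 0) := by
  funext j; simp [Pmap]; ring

lemma Pw_zero (ω : Fin 0 → Fin 3) (x : Pt) : Pw q 0 ω x = x := rfl

lemma Pw_succ (m : ℕ) (ω : Fin (m+1) → Fin 3) (x : Pt) :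
    Pw q (m+1) ω x = Pmap q (ω 0) (Pw q m (fun k => ω k.succ) x) := rfl

lemma Pw_one (ω : Fin 1 → Fin 3) (x : Pt) : Pw q 1 ω x = Pmap q (ω 0) x := rfl

lemma Pw_cons (m : ℕ) (a : Fin 3) (g : Fin m → Fin 3) (x : Pt) :
    Pw q (m+1) (Fin.cons a g) x = Pmap q a (Pw q m g x) := by
  rw [Pw_succ]
  simp [Fin.cons_zero, Fin.cons_succ]

lemma const_eq_cons (m : ℕ) (i : Fin 3) :
    (fun _ => i : Fin (m+1) → Fin 3) = Fin.cons i (fun _ => i) := by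
  funext k
  cases k using Fin.cases <;> simp

lemma Pw_const_succ' (m : ℕ) (i : Fin 3) (x : Pt) :
    Pw q (m+1) (fun _ => i) x = Pmap q i (Pw q m (fun _ => i) x) := by
  rw [const_eq_cons, Pw_cons]

lemma Pw_const_fix (m : ℕ) (i : Fin 3) : Pw q m (fun _ => i) (q i) = q i := by
  induction m with
  | zero => rfl
  | succ n ih => rw [Pw_const_succ', ih, Pmap_fix]

lemma Pw_const_succ (m : ℕ) (i : Fin 3) (x : Pt) :
    Pw q (m+1) (fun _ => i) x = Pw q m (fun _ => i) (Pmap q i x) := by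
  induction m with
  | zero => rfl
  | succ n ih => rw [Pw_const_succ' q (n+1), ih, ← Pw_const_succ' q n]

lemma exists_coords (hq : AffineIndependent ℝ q) :
    ∃ c : Fin 3 → (Pt →ᵃ[ℝ] ℝ), ∀ i j, c i (q j) = if i = j then 1 else 0 := by
  have htot : affineSpan ℝ (Set.range q) = ⊤ := by
    rw [hq.affineSpan_eq_top_iff_card_eq_finrank_add_one]
    simp [Module.finrank_fintype_fun_eq_card]
  let b : AffineBasis (Fin 3) ℝ Pt := ⟨q, hq, htot⟩
  exact ⟨fun i => b.coord i, fun i j => by rw [show q j = b j from rfl, b.coord_apply]⟩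

variable (c : Fin 3 → (Pt →ᵃ[ℝ] ℝ)) (hc : ∀ i j, c i (q j) = if i = j then 1 else 0)

include hc in
lemma coord_nonneg (m : ℕ) (ω : Fin m → Fin 3) (j i : Fin 3) :
    0 ≤ c i (Pw q m ω (q j)) := by
  induction m with
  | zero => rw [Pw_zero, hc]; split <;> norm_num
  | succ n ih =>
    rw [Pw_succ, coord_Pmap]
    have h1 := ih (fun k => ω k.succ)
    have h2 : (0:ℝ) ≤ c i (q (ω 0)) := by rw [hc]; split <;> norm_num
    linarith

include hc in
lemma solve_Pmap (a i : Fin 3) (y : Pt) (hy : ∀ i', 0 ≤ c i' y)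
    (h : Pmap q a y = q i) : a = i ∧ y = q i := by
  have hai : a = i := by
    by_contra hne
    have h3 := congrArg (c a) h
    rw [coord_Pmap, hc a a, hc a i, if_pos rfl, if_neg hne] at h3
    have := hy a
    simp at h3
    linarith
  subst hai
  rw [← Pmap_fix q a] at h
  exact ⟨rfl, Pmap_injective q a h⟩

include hc in
lemma solve_Pmap_mid (a : Fin 3) (y : Pt) (hy : ∀ i', 0 ≤ c i' y)
    (h : Pmap q a y = Pmap q 0 (q 1)) :
    (a = 0 ∧ y = q 1) ∨ (a = 1 ∧ y = q 0) := by
  have ha3 : a = 0 ∨ a = 1 ∨ a = 2 := by omega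
  rcases ha3 with rfl | rfl | rfl
  · exact Or.inl ⟨rfl, Pmap_injective q 0 h⟩
  · rw [Pmap_comm01] at h
    exact Or.inr ⟨rfl, Pmap_injective q 1 h⟩
  · exfalso
    have h3 := congrArg (c 2) h
    rw [coord_Pmap, coord_Pmap, hc 2 2, hc 2 1, hc 2 0] at h3
    simp at h3
    have := hy 2
    linarith

include hc in
lemma Pw_eq_vertex (m : ℕ) (ω : Fin m → Fin 3) (j i : Fin 3)
    (h : Pw q m ω (q j) = q i) : (∀ k, ω k = i) ∧ j = i := by
  induction m with
  | zero =>
    refine ⟨fun k => k.elim0, ?_⟩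
    have hinj : Function.Injective q := by
      intro a b hab
      by_contra hne
      have h5 := hc a a
      rw [hab, hc a b] at h5
      simp [hne] at h5
    exact hinj h
  | succ n ih =>
    rw [Pw_succ] at h
    obtain ⟨h1, h2⟩ := solve_Pmap q c hc (ω 0) i _ (fun i' => coord_nonneg q c hc n _ j i') h
    obtain ⟨h3, h4⟩ := ih (fun k => ω k.succ) h2
    refine ⟨fun k => ?_, h4⟩
    cases k using Fin.cases with
    | zero => exact h1
    | succ k' => exact h3 k'

include hc in
lemma Pw_eq_mid (m : ℕ) (ω : Fin (m+1) → Fin 3) (j : Fin 3)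
    (h : Pw q (m+1) ω (q j) = Pmap q 0 (q 1)) :
    (ω = Fin.cons 0 (fun _ => 1) ∧ j = 1) ∨ (ω = Fin.cons 1 (fun _ => 0) ∧ j = 0) := by
  rw [Pw_succ] at h
  rcases solve_Pmap_mid q c hc (ω 0) _ (fun i' => coord_nonneg q c hc m _ j i') h with
    ⟨h1, h2⟩ | ⟨h1, h2⟩
  · obtain ⟨h3, h4⟩ := Pw_eq_vertex q c hc m _ j 1 h2
    refine Or.inl ⟨?_, h4⟩
    funext k
    cases k using Fin.cases with
    | zero => simpa using h1
    | succ k' => simpa using h3 k'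
  · obtain ⟨h3, h4⟩ := Pw_eq_vertex q c hc m _ j 0 h2
    refine Or.inr ⟨?_, h4⟩
    funext k
    cases k using Fin.cases with
    | zero => simpa using h1
    | succ k' => simpa using h3 k'

lemma fin3_resolve : ∀ (i j k l : Fin 3), i ≠ j → j ≠ k → i ≠ k → l ≠ i → (l = j ∨ l = k) := by
  decide

include hc in
lemma graphLap_vertex (u : Pt → ℝ) (m : ℕ) (i j k : Fin 3)
    (hij : i ≠ j) (hjk : j ≠ k) (hik : i ≠ k) :
    graphLap q m u (q i) =
      (u (Pw q m (fun _ => i) (q j)) - u (q i)) +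
      (u (Pw q m (fun _ => i) (q k)) - u (q i)) := by
  classical
  rw [graphLap]
  rw [Finset.sum_eq_single_of_mem (fun _ => i) (Finset.mem_univ _) ?h0]
  case h0 =>
    intro ω _ hω
    refine Finset.sum_eq_zero fun p hp => ?_
    rw [Finset.mem_filter] at hp
    exact absurd (funext fun k' => (Pw_eq_vertex q c hc m ω p.1 i hp.2.2).1 k') hω
  have hfil : (Finset.univ.filter
      (fun p : Fin 3 × Fin 3 => p.1 ≠ p.2 ∧ Pw q m (fun _ => i) (q p.1) = q i)) =
      {(i,j), (i,k)} := by
    ext p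
    simp only [Finset.mem_filter, Finset.mem_univ, true_and, Finset.mem_insert,
      Finset.mem_singleton]
    constructor
    · rintro ⟨hne, hp⟩
      have h1 := (Pw_eq_vertex q c hc m _ p.1 i hp).2
      subst h1
      rcases fin3_resolve p.1 j k p.2 hij hjk hik (Ne.symm hne) with h2 | h2
      · left; exact Prod.ext rfl h2
      · right; exact Prod.ext rfl h2
    · rintro (rfl | rfl)
      · exact ⟨hij, Pw_const_fix q m i⟩
      · exact ⟨hik, Pw_const_fix q m i⟩
  rw [hfil, Finset.sum_pair (by simp [Prod.ext_iff, hjk])]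

include hc in
lemma graphLap_mid (u : Pt → ℝ) (m : ℕ) :
    graphLap q (m+1) u (Pmap q 0 (q 1)) =
      ((u (Pmap q 0 (Pw q m (fun _ => 1) (q 0))) - u (Pmap q 0 (q 1))) +
       (u (Pmap q 0 (Pw q m (fun _ => 1) (q 2))) - u (Pmap q 0 (q 1)))) +
      ((u (Pmap q 1 (Pw q m (fun _ => 0) (q 1))) - u (Pmap q 0 (q 1))) +
       (u (Pmap q 1 (Pw q m (fun _ => 0) (q 2))) - u (Pmap q 0 (q 1)))) := by
  classical
  set w1 : Fin (m+1) → Fin 3 := Fin.cons 0 (fun _ => 1) with hw1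
  set w2 : Fin (m+1) → Fin 3 := Fin.cons 1 (fun _ => 0) with hw2
  have hw12 : w1 ≠ w2 := by
    intro hcon
    have := congrFun hcon 0
    simp [hw1, hw2] at this
  rw [graphLap]
  rw [← Finset.sum_subset (Finset.subset_univ ({w1, w2} : Finset (Fin (m+1) → Fin 3)))
    (fun ω _ hω => ?vanish)]
  case vanish =>
    refine Finset.sum_eq_zero fun p hp => ?_
    rw [Finset.mem_filter] at hp
    rcases Pw_eq_mid q c hc m ω p.1 hp.2.2 with ⟨h1, _⟩ | ⟨h1, _⟩
    · exact absurd (by simp [h1, hw1]) hω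
    · exact absurd (by simp [h1, hw2]) hω
  rw [Finset.sum_pair hw12]
  have hfil1 : (Finset.univ.filter
      (fun p : Fin 3 × Fin 3 => p.1 ≠ p.2 ∧ Pw q (m+1) w1 (q p.1) = Pmap q 0 (q 1))) =
      {((1:Fin 3),(0:Fin 3)), (1,2)} := by
    ext p
    simp only [Finset.mem_filter, Finset.mem_univ, true_and, Finset.mem_insert,
      Finset.mem_singleton]
    constructor
    · rintro ⟨hne, hp⟩
      obtain ⟨p1, p2⟩ := p
      rcases Pw_eq_mid q c hc m w1 p1 hp with ⟨_, h2⟩ | ⟨h1, _⟩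
      · subst h2
        rcases fin3_resolve 1 0 2 p2 (by decide) (by decide) (by decide) (Ne.symm hne)
          with h3 | h3
        · left; exact Prod.ext rfl h3
        · right; exact Prod.ext rfl h3
      · exact absurd (hw1 ▸ h1) hw12
    · rintro (rfl | rfl)
      · exact ⟨by decide, by rw [hw1, Pw_cons, Pw_const_fix]⟩
      · exact ⟨by decide, by rw [hw1, Pw_cons, Pw_const_fix]⟩
  have hfil2 : (Finset.univ.filter
      (fun p : Fin 3 × Fin 3 => p.1 ≠ p.2 ∧ Pw q (m+1) w2 (q p.1) = Pmap q 0 (q 1))) =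
      {((0:Fin 3),(1:Fin 3)), (0,2)} := by
    ext p
    simp only [Finset.mem_filter, Finset.mem_univ, true_and, Finset.mem_insert,
      Finset.mem_singleton]
    constructor
    · rintro ⟨hne, hp⟩
      obtain ⟨p1, p2⟩ := p
      rcases Pw_eq_mid q c hc m w2 p1 hp with ⟨h1, _⟩ | ⟨_, h2⟩
      · exact absurd (hw2 ▸ h1.symm) hw12
      · subst h2
        rcases fin3_resolve 0 1 2 p2 (by decide) (by decide) (by decide) (Ne.symm hne)
          with h3 | h3
        · left; exact Prod.ext rfl h3
        · right; exact Prod.ext rfl h3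
    · rintro (rfl | rfl)
      · refine ⟨by decide, by rw [hw2, Pw_cons, Pw_const_fix, Pmap_comm01]⟩
      · refine ⟨by decide, by rw [hw2, Pw_cons, Pw_const_fix, Pmap_comm01]⟩
  rw [hfil1, hfil2, Finset.sum_pair (by decide), Finset.sum_pair (by decide)]
  rw [hw1, hw2]
  simp only [Pw_cons]

include hc in
lemma harm_scale (h : Pt → ℝ) (hh : IsHarmonic q h) (i j k : Fin 3)
    (hij : i ≠ j) (hjk : j ≠ k) (hik : i ≠ k) : ∀ m : ℕ,
    h (Pw q m (fun _ => i) (q j)) + h (Pw q m (fun _ => i) (q k)) - 2 * h (q i)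
      = (3/5)^m * (h (q j) + h (q k) - 2 * h (q i)) := by
  intro m
  induction m with
  | zero => rw [Pw_zero, Pw_zero]; ring
  | succ n ih =>
    rw [Pw_const_succ, Pw_const_succ,
      hh.2 n (fun _ => i) i j k hij hjk hik,
      hh.2 n (fun _ => i) i k j hik (Ne.symm hjk) hij,
      Pw_const_fix]
    linear_combination (3/5 : ℝ) * ih

lemma mem_SG_Pw (m : ℕ) (ω : Fin m → Fin 3) (j : Fin 3) : Pw q m ω (q j) ∈ SG q :=
  subset_closure (Set.mem_iUnion.mpr ⟨m, ⟨ω, j, rfl⟩⟩)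

lemma mem_SG_vertex (j : Fin 3) : q j ∈ SG q :=
  mem_SG_Pw q 0 Fin.elim0 j


/-- for an FIF with uniform vertical scaling factor `d ≠ 3/5`,
the explicit formula for `Δ_{m+1} f (q_{12})`.  Here `q 0, q 1, q 2` play the
roles of `q₁, q₂, q₃`. -/
theorem stmt_8 (q : Fin 3 → Pt) (hq : AffineIndependent ℝ q)
    (d : ℝ) (hd : d ∈ Set.Ioo (-1 : ℝ) 1) (hd3 : d ≠ 3/5)
    (f : Pt → ℝ) (hf : IsFIF q (fun _ => d) f) (m : ℕ) :
    graphLap q (m+1) f (Pmap q 0 (q 1)) =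
      d * ((f (Pmap q 1 (q 0)) + f (Pmap q 1 (q 2)) - 2 * f (q 1))
            + (f (Pmap q 0 (q 1)) + f (Pmap q 0 (q 2)) - 2 * f (q 0))
            + (3/5) * (f (q 0) + f (q 1) - 2 * f (q 2))) / (3/5 - d)
          * ((3/5 : ℝ)^m - d^m)
        + (f (q 0) + f (Pmap q 0 (q 2)) + f (q 1) + f (Pmap q 1 (q 2))
            - 4 * f (Pmap q 0 (q 1))) * (3/5 : ℝ)^m := by
  obtain ⟨hfc, h, hharm, hfe⟩ := hf
  obtain ⟨c, hc⟩ := exists_coords q hq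
  have hne : (3/5 : ℝ) - d ≠ 0 := sub_ne_zero.mpr (Ne.symm hd3)
  have hF : ∀ i : Fin 3, ∀ x ∈ SG q, f (Pmap q i x) = d * f x + h i x := fun i x hx =>
    hfe i x hx
  -- vertex recursion
  have ha : ∀ (i j k : Fin 3), i ≠ j → j ≠ k → i ≠ k → ∀ n : ℕ,
      graphLap q (n+1) f (q i) = d * graphLap q n f (q i)
        + (3/5)^n * (h i (q j) + h i (q k) - 2 * h i (q i)) := by
    intro i j k hij hjk hik n
    rw [graphLap_vertex q c hc f (n+1) i j k hij hjk hik,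
        graphLap_vertex q c hc f n i j k hij hjk hik]
    have t1 : f (Pw q (n+1) (fun _ => i) (q j))
        = d * f (Pw q n (fun _ => i) (q j)) + h i (Pw q n (fun _ => i) (q j)) := by
      rw [Pw_const_succ']; exact hF i _ (mem_SG_Pw q n _ j)
    have t2 : f (Pw q (n+1) (fun _ => i) (q k))
        = d * f (Pw q n (fun _ => i) (q k)) + h i (Pw q n (fun _ => i) (q k)) := by
      rw [Pw_const_succ']; exact hF i _ (mem_SG_Pw q n _ k)
    have t0 : f (q i) = d * f (q i) + h i (q i) := by
      conv_lhs => rw [← Pmap_fix q i]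
      exact hF i _ (mem_SG_vertex q i)
    have hs := harm_scale q c hc (h i) (hharm i) i j k hij hjk hik n
    linear_combination t1 + t2 - 2*t0 + hs
  -- midpoint recursion
  have hL : ∀ n : ℕ, graphLap q (n+1) f (Pmap q 0 (q 1)) =
      d * (graphLap q n f (q 0) + graphLap q n f (q 1))
        + (3/5)^n * ((h 0 (q 0) + h 0 (q 2) - 2 * h 0 (q 1))
            + (h 1 (q 1) + h 1 (q 2) - 2 * h 1 (q 0))) := by
    intro n
    rw [graphLap_mid q c hc f n,
        graphLap_vertex q c hc f n 0 1 2 (by decide) (by decide) (by decide),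
        graphLap_vertex q c hc f n 1 0 2 (by decide) (by decide) (by decide)]
    have t10 : f (Pmap q 0 (Pw q n (fun _ => 1) (q 0)))
        = d * f (Pw q n (fun _ => 1) (q 0)) + h 0 (Pw q n (fun _ => 1) (q 0)) :=
      hF 0 _ (mem_SG_Pw q n _ 0)
    have t12 : f (Pmap q 0 (Pw q n (fun _ => 1) (q 2)))
        = d * f (Pw q n (fun _ => 1) (q 2)) + h 0 (Pw q n (fun _ => 1) (q 2)) :=
      hF 0 _ (mem_SG_Pw q n _ 2)
    have t01 : f (Pmap q 1 (Pw q n (fun _ => 0) (q 1)))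
        = d * f (Pw q n (fun _ => 0) (q 1)) + h 1 (Pw q n (fun _ => 0) (q 1)) :=
      hF 1 _ (mem_SG_Pw q n _ 1)
    have t02 : f (Pmap q 1 (Pw q n (fun _ => 0) (q 2)))
        = d * f (Pw q n (fun _ => 0) (q 2)) + h 1 (Pw q n (fun _ => 0) (q 2)) :=
      hF 1 _ (mem_SG_Pw q n _ 2)
    have tx0 : f (Pmap q 0 (q 1)) = d * f (q 1) + h 0 (q 1) := hF 0 _ (mem_SG_vertex q 1)
    have tx1 : f (Pmap q 0 (q 1)) = d * f (q 0) + h 1 (q 0) := by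
      rw [Pmap_comm01]; exact hF 1 _ (mem_SG_vertex q 0)
    have hs0 := harm_scale q c hc (h 0) (hharm 0) 1 0 2 (by decide) (by decide) (by decide) n
    have hs1 := harm_scale q c hc (h 1) (hharm 1) 0 1 2 (by decide) (by decide) (by decide) n
    linear_combination t10 + t12 + t01 + t02 - 2*tx0 - 2*tx1 + hs0 + hs1
  -- identification of small Laplacians with f-expressions
  have hA0f : graphLap q 0 f (q 0) = f (q 1) + f (q 2) - 2 * f (q 0) := by
    rw [graphLap_vertex q c hc f 0 0 1 2 (by decide) (by decide) (by decide),
      Pw_zero, Pw_zero]; ring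
  have hB0f : graphLap q 0 f (q 1) = f (q 0) + f (q 2) - 2 * f (q 1) := by
    rw [graphLap_vertex q c hc f 0 1 0 2 (by decide) (by decide) (by decide),
      Pw_zero, Pw_zero]; ring
  have hA1f : graphLap q 1 f (q 0) = f (Pmap q 0 (q 1)) + f (Pmap q 0 (q 2)) - 2 * f (q 0) := by
    rw [graphLap_vertex q c hc f 1 0 1 2 (by decide) (by decide) (by decide)]
    simp only [Pw_one]; ring
  have hB1f : graphLap q 1 f (q 1) = f (Pmap q 1 (q 0)) + f (Pmap q 1 (q 2)) - 2 * f (q 1) := by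
    rw [graphLap_vertex q c hc f 1 1 0 2 (by decide) (by decide) (by decide)]
    simp only [Pw_one]; ring
  have hL0f : graphLap q 1 f (Pmap q 0 (q 1)) =
      f (q 0) + f (Pmap q 0 (q 2)) + f (q 1) + f (Pmap q 1 (q 2)) - 4 * f (Pmap q 0 (q 1)) := by
    rw [graphLap_mid q c hc f 0]
    simp only [Pw_zero]
    rw [Pmap_fix q 0, Pmap_fix q 1]; ring
  -- express the harmonic constants in terms of f
  have ha0 := ha 0 1 2 (by decide) (by decide) (by decide) 0
  have hb0 := ha 1 0 2 (by decide) (by decide) (by decide) 0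
  have hL0 := hL 0
  simp only [zero_add, pow_zero, one_mul] at ha0 hb0 hL0
  have hαf : h 0 (q 1) + h 0 (q 2) - 2 * h 0 (q 0)
      = (f (Pmap q 0 (q 1)) + f (Pmap q 0 (q 2)) - 2 * f (q 0))
        - d * (f (q 1) + f (q 2) - 2 * f (q 0)) := by
    linear_combination (-1 : ℝ) * ha0 + hA1f - d * hA0f
  have hβf : h 1 (q 0) + h 1 (q 2) - 2 * h 1 (q 1)
      = (f (Pmap q 1 (q 0)) + f (Pmap q 1 (q 2)) - 2 * f (q 1))
        - d * (f (q 0) + f (q 2) - 2 * f (q 1)) := by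
    linear_combination (-1 : ℝ) * hb0 + hB1f - d * hB0f
  have hγf : (h 0 (q 0) + h 0 (q 2) - 2 * h 0 (q 1)) + (h 1 (q 1) + h 1 (q 2) - 2 * h 1 (q 0))
      = (f (q 0) + f (Pmap q 0 (q 2)) + f (q 1) + f (Pmap q 1 (q 2)) - 4 * f (Pmap q 0 (q 1)))
        - d * ((f (q 1) + f (q 2) - 2 * f (q 0)) + (f (q 0) + f (q 2) - 2 * f (q 1))) := by
    linear_combination (-1 : ℝ) * hL0 + hL0f - d * hA0f - d * hB0f
  -- self-contained recursion for the midpoint Laplacian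
  have hrecF : ∀ n : ℕ, graphLap q (n+1+1) f (Pmap q 0 (q 1)) =
      d * graphLap q (n+1) f (Pmap q 0 (q 1))
        + (3/5)^n * (d * ((f (Pmap q 1 (q 0)) + f (Pmap q 1 (q 2)) - 2 * f (q 1))
            + (f (Pmap q 0 (q 1)) + f (Pmap q 0 (q 2)) - 2 * f (q 0))
            + (3/5) * (f (q 0) + f (q 1) - 2 * f (q 2)))
          + (3/5 - d) * (f (q 0) + f (Pmap q 0 (q 2)) + f (q 1) + f (Pmap q 1 (q 2))
            - 4 * f (Pmap q 0 (q 1)))) := by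
    intro n
    have han := ha 0 1 2 (by decide) (by decide) (by decide) n
    have hbn := ha 1 0 2 (by decide) (by decide) (by decide) n
    linear_combination hL (n+1) - d * hL n + d * han + d * hbn
      + (3/5:ℝ)^n * d * hαf + (3/5:ℝ)^n * d * hβf + (3/5:ℝ)^n * (3/5 - d) * hγf
  -- closed form
  have key : ∀ n : ℕ, (3/5 - d) * graphLap q (n+1) f (Pmap q 0 (q 1)) =
      d * ((f (Pmap q 1 (q 0)) + f (Pmap q 1 (q 2)) - 2 * f (q 1))
            + (f (Pmap q 0 (q 1)) + f (Pmap q 0 (q 2)) - 2 * f (q 0))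
            + (3/5) * (f (q 0) + f (q 1) - 2 * f (q 2))) * ((3/5 : ℝ)^n - d^n)
        + (3/5 - d) * (f (q 0) + f (Pmap q 0 (q 2)) + f (q 1) + f (Pmap q 1 (q 2))
            - 4 * f (Pmap q 0 (q 1))) * (3/5 : ℝ)^n := by
    intro n
    induction n with
    | zero =>
      simp only [zero_add]
      linear_combination (3/5 - d) * hL0f
    | succ n ih =>
      linear_combination d * ih + (3/5 - d) * hrecF n
  have hkey := key m
  have h2 : graphLap q (m+1) f (Pmap q 0 (q 1)) =
      (d * ((f (Pmap q 1 (q 0)) + f (Pmap q 1 (q 2)) - 2 * f (q 1))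
            + (f (Pmap q 0 (q 1)) + f (Pmap q 0 (q 2)) - 2 * f (q 0))
            + (3/5) * (f (q 0) + f (q 1) - 2 * f (q 2))) * ((3/5 : ℝ)^m - d^m)
        + (3/5 - d) * (f (q 0) + f (Pmap q 0 (q 2)) + f (q 1) + f (Pmap q 1 (q 2))
            - 4 * f (Pmap q 0 (q 1))) * (3/5 : ℝ)^m) / (3/5 - d) := by
    rw [← hkey, mul_div_cancel_left₀ _ hne]
  rw [h2, add_div, mul_assoc ((3:ℝ)/5 - d), mul_div_cancel_left₀ _ hne]
  conv_rhs => rw [div_mul_eq_mul_div]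

end
end

section
/- Let a₁, a₂, a₃, η be real numbers, and let u be an FIF on SG with uniform vertical scaling factor d = 1/5 such that u(q_i) = a_i for i = 1,2,3 and u(P_i(q_j)) = (1/5)·(2a_i + 2a_j + a_{6−i−j} − η/3) for all distinct i, j ∈ {1,2,3}. Then (3/2)·5^m·Δ_m u converges to the constant η uniformly on V_*∖V₀ as m → ∞; in particular Δu(p) = η for every p ∈ V_*∖V₀. -/
open Finset Filter

noncomputable section

namespace SGaux

variable (q : Fin 3 → Pt)

lemma Pmap_apply (i : Fin 3) (x : Pt) (t : Fin 2) :
    Pmap q i x t = (x t + q i t) / 2 := rfl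

/-- List version of `Pw`. -/
def Pl : List (Fin 3) → Pt → Pt
  | [], x => x
  | c :: l, x => Pmap q c (Pl l x)

@[simp] lemma Pl_nil (x : Pt) : Pl q [] x = x := rfl
@[simp] lemma Pl_cons (c : Fin 3) (l : List (Fin 3)) (x : Pt) :
    Pl q (c :: l) x = Pmap q c (Pl q l x) := rfl

lemma Pl_append (l₁ l₂ : List (Fin 3)) (x : Pt) :
    Pl q (l₁ ++ l₂) x = Pl q l₁ (Pl q l₂ x) := by
  induction l₁ with
  | nil => rfl
  | cons c l ih => simp [ih]

lemma Pw_eq_Pl (m : ℕ) (ω : Fin m → Fin 3) (x : Pt) :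
    Pw q m ω x = Pl q (List.ofFn ω) x := by
  induction m with
  | zero => rfl
  | succ m ih =>
    rw [List.ofFn_succ]
    show Pmap q (ω 0) _ = Pmap q (ω 0) _
    rw [ih]

lemma Pl_eq_Pw (l : List (Fin 3)) (x : Pt) :
    Pl q l x = Pw q l.length l.get x := by
  rw [Pw_eq_Pl, List.ofFn_get]

@[simp] lemma Pmap_self (i : Fin 3) : Pmap q i (q i) = q i := by
  funext t
  rw [Pmap_apply]
  ring

lemma Pmap_comm (i j : Fin 3) : Pmap q i (q j) = Pmap q j (q i) := by
  funext t; simp [Pmap]; ring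

@[simp] lemma Pl_replicate_self (t : ℕ) (j : Fin 3) :
    Pl q (List.replicate t j) (q j) = q j := by
  induction t with
  | zero => rfl
  | succ t ih => simp [List.replicate_succ, ih]

lemma Pmap_injective (c : Fin 3) : Function.Injective (Pmap q c) := by
  intro x y h
  funext t
  have := congrFun h t
  rw [Pmap_apply, Pmap_apply] at this
  linarith

section Coord

/-- The affine basis given by the three vertices. -/
def qBasis (hq : AffineIndependent ℝ q) : AffineBasis (Fin 3) ℝ Pt :=
  ⟨q, hq, by
    rw [hq.affineSpan_eq_top_iff_card_eq_finrank_add_one]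
    simp [Module.finrank_fin_fun]⟩

@[simp] lemma qBasis_apply (hq : AffineIndependent ℝ q) (i : Fin 3) : qBasis q hq i = q i := rfl

lemma coord_Pmap (hq : AffineIndependent ℝ q) (c : Fin 3) (x : Pt) (t : Fin 3) :
    (qBasis q hq).coord t (Pmap q c x) =
      ((qBasis q hq).coord t x + if t = c then 1 else 0) / 2 := by
  have hmid : Pmap q c x = midpoint ℝ x (q c) := by
    funext s
    rw [Pmap_apply, midpoint_eq_smul_add]
    simp
    ring
  rw [hmid, AffineMap.map_midpoint, midpoint_eq_smul_add]
  have : (qBasis q hq).coord t (q c) = if t = c then 1 else 0 := by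
    have := (qBasis q hq).coord_apply t c
    simpa using this
  rw [this]
  simp
  ring

/-- Digit count: `nl l a t = Σ_k 2^(L-1-k)·[l_k = t] + [a = t]`. -/
def nl : List (Fin 3) → Fin 3 → Fin 3 → ℕ
  | [], a, t => if a = t then 1 else 0
  | c :: l, a, t => (if c = t then 2 ^ l.length else 0) + nl l a t

lemma coord_Pl (hq : AffineIndependent ℝ q) (l : List (Fin 3)) (a t : Fin 3) :
    (qBasis q hq).coord t (Pl q l (q a)) * 2 ^ l.length = (nl l a t : ℝ) := by
  induction l with
  | nil =>
    have hc := (qBasis q hq).coord_apply t a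
    simp only [qBasis_apply] at hc
    show (qBasis q hq).coord t (q a) * 1 = _
    rw [hc]
    by_cases h : a = t
    · simp [nl, h]
    · simp only [nl, if_neg h, if_neg (fun ht : t = a => h ht.symm), Nat.cast_zero, mul_one]
  | cons c l ih =>
    rw [Pl_cons, coord_Pmap q hq]
    show _ = ((nl (c :: l) a t : ℕ) : ℝ)
    simp only [nl, List.length_cons]
    push_cast
    rw [← ih]
    by_cases h : c = t
    · subst h
      rw [if_pos rfl, if_pos rfl]
      ring
    · rw [if_neg (fun ht : t = c => h ht.symm), if_neg h]
      push_cast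
      ring

lemma nl_le (l : List (Fin 3)) (a t : Fin 3) : nl l a t ≤ 2 ^ l.length := by
  induction l with
  | nil => simp only [nl, List.length_nil, pow_zero]; split <;> omega
  | cons c l ih =>
    simp only [nl, List.length_cons, pow_succ]
    by_cases h : c = t
    · rw [if_pos h]; omega
    · rw [if_neg h]; omega

lemma nl_eq_of_Pl_eq (hq : AffineIndependent ℝ q) {l₁ l₂ : List (Fin 3)}
    (hlen : l₁.length = l₂.length)
    {a b : Fin 3} (h : Pl q l₁ (q a) = Pl q l₂ (q b)) :
    ∀ t, nl l₁ a t = nl l₂ b t := by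
  intro t
  have h1 := coord_Pl q hq l₁ a t
  have h2 := coord_Pl q hq l₂ b t
  rw [h, hlen] at h1
  have : (nl l₁ a t : ℝ) = nl l₂ b t := by rw [← h1, ← h2]
  exact_mod_cast this

lemma nl_eq_two_pow {l : List (Fin 3)} {a t : Fin 3}
    (h : nl l a t = 2 ^ l.length) : l = List.replicate l.length t ∧ a = t := by
  induction l with
  | nil =>
    simp only [nl, List.length_nil, pow_zero] at h
    refine ⟨rfl, ?_⟩
    by_contra hc
    rw [if_neg hc] at h
    omega
  | cons c l ih =>
    have hle := nl_le l a t
    simp only [nl, List.length_cons, pow_succ] at h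
    by_cases hc : c = t
    · rw [if_pos hc] at h
      have : nl l a t = 2 ^ l.length := by omega
      obtain ⟨h1, h2⟩ := ih this
      subst hc
      exact ⟨by rw [List.length_cons, List.replicate_succ, ← h1], h2⟩
    · rw [if_neg hc] at h
      have h2 : (2:ℕ) ^ l.length ≥ 1 := Nat.one_le_two_pow
      omega

lemma nl_replicate_ne {t : ℕ} {c d : Fin 3} (h : c ≠ d) (b : Fin 3) (hb : b ≠ d) :
    nl (List.replicate t c) b d = 0 := by
  induction t with
  | zero => simp [nl, hb]
  | succ t ih => simpa [List.replicate_succ, nl, h] using ih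

/-- Uniqueness of addresses on the gasket. -/
lemma address_uniq (hq : AffineIndependent ℝ q) :
    ∀ (l₁ l₂ : List (Fin 3)), l₁.length = l₂.length → ∀ (a b : Fin 3),
    Pl q l₁ (q a) = Pl q l₂ (q b) →
    (l₁ = l₂ ∧ a = b) ∨
    ∃ (τ : List (Fin 3)) (i j : Fin 3) (t : ℕ), i ≠ j ∧
      l₁ = τ ++ i :: List.replicate t j ∧ a = j ∧
      l₂ = τ ++ j :: List.replicate t i ∧ b = i := by
  intro l₁
  induction l₁ with
  | nil =>
    intro l₂ hlen a b h
    rw [List.length_nil] at hlen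
    rw [List.eq_nil_of_length_eq_zero hlen.symm] at h ⊢
    left
    exact ⟨rfl, hq.injective h⟩
  | cons c l₁' ih =>
    intro l₂ hlen a b h
    match l₂ with
    | [] => simp at hlen
    | d :: l₂' =>
      simp only [List.length_cons, Nat.add_right_cancel_iff] at hlen
      by_cases hcd : c = d
      · subst hcd
        have h' : Pl q l₁' (q a) = Pl q l₂' (q b) :=
          Pmap_injective q c h
        rcases ih l₂' hlen a b h' with ⟨h1, h2⟩ | ⟨τ, i, j, t, hij, e1, e2, e3, e4⟩
        · left; exact ⟨by rw [h1], h2⟩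
        · right
          exact ⟨c :: τ, i, j, t, hij, by rw [e1]; rfl, e2, by rw [e3]; rfl, e4⟩
      · -- heads differ: digit argument
        have hnl := nl_eq_of_Pl_eq q hq (by simp [hlen]) h
        have hc := hnl c
        have hd := hnl d
        simp only [nl, if_neg hcd, if_neg (fun hx : d = c => hcd hx.symm),
          if_pos trivial, eq_self_iff_true, if_true, zero_add, hlen] at hc hd
        have hle2 := nl_le l₂' b c
        have h20 : nl l₂' b c = 2 ^ l₂'.length := by omega
        obtain ⟨hrep2, hb⟩ := nl_eq_two_pow h20
        have h10 : nl l₁' a c = 0 := by omega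
        -- coordinate d
        have hzero : nl l₂' b d = 0 := by
          rw [hrep2, hb]
          exact nl_replicate_ne hcd c hcd
        have h1d : nl l₁' a d = 2 ^ l₂'.length := by omega
        rw [← hlen] at h1d
        obtain ⟨hrep1, ha⟩ := nl_eq_two_pow h1d
        right
        refine ⟨[], c, d, l₁'.length, hcd, ?_, ha, ?_, hb⟩
        · rw [List.nil_append, ← hrep1]
        · rw [List.nil_append, hlen, ← hrep2]

/-- Every word decomposes as all-`a` or `τ ++ i :: replicate t a` with `i ≠ a`. -/
lemma word_decomp (l : List (Fin 3)) (a : Fin 3) :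
    l = List.replicate l.length a ∨
    ∃ (τ : List (Fin 3)) (i : Fin 3) (t : ℕ), i ≠ a ∧ l = τ ++ i :: List.replicate t a := by
  induction l with
  | nil => left; rfl
  | cons c l ih =>
    rcases ih with h | ⟨τ, i, t, hia, h⟩
    · by_cases hca : c = a
      · left; rw [List.length_cons, List.replicate_succ, hca, ← h]
      · right; exact ⟨[], c, l.length, hca, by rw [List.nil_append, ← h]⟩
    · right; exact ⟨c :: τ, i, t, hia, by rw [h]; rfl⟩

/-- Uniqueness of the `τ ++ i :: replicate t j` decomposition. -/
lemma decomp_uniq : ∀ (τ τ' : List (Fin 3)) (i i' j : Fin 3) (t t' : ℕ), i ≠ j → i' ≠ j →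
    τ ++ i :: List.replicate t j = τ' ++ i' :: List.replicate t' j →
    τ = τ' ∧ i = i' ∧ t = t' := by
  intro τ
  induction τ with
  | nil =>
    intro τ' i i' j t t' hij hij' h
    match τ' with
    | [] =>
      rw [List.nil_append, List.nil_append] at h
      obtain ⟨h1, h2⟩ := List.cons.injEq .. ▸ h
      have := congrArg List.length h2
      simp only [List.length_replicate] at this
      exact ⟨rfl, h1, this⟩
    | e :: τ'' =>
      exfalso
      rw [List.nil_append] at h
      obtain ⟨h1, h2⟩ := List.cons.injEq .. ▸ h
      have hmem : i' ∈ List.replicate t j := by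
        rw [h2]
        exact List.mem_append_right _ List.mem_cons_self
      exact hij' (List.eq_of_mem_replicate hmem)
  | cons c τ₀ ih =>
    intro τ' i i' j t t' hij hij' h
    match τ' with
    | [] =>
      exfalso
      rw [List.nil_append] at h
      obtain ⟨h1, h2⟩ := List.cons.injEq .. ▸ h
      have hmem : i ∈ List.replicate t' j := by
        rw [← h2]
        exact List.mem_append_right _ List.mem_cons_self
      exact hij (List.eq_of_mem_replicate hmem)
    | e :: τ₁ =>
      rw [List.cons_append, List.cons_append] at h
      obtain ⟨h1, h2⟩ := List.cons.injEq .. ▸ h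
      obtain ⟨e1, e2, e3⟩ := ih τ₁ i i' j t t' hij hij' h2
      exact ⟨by rw [h1, e1], e2, e3⟩

end Coord

section Values

lemma mem_Vstar (l : List (Fin 3)) (e : Fin 3) : Pl q l (q e) ∈ Vstar q := by
  rw [Pl_eq_Pw]
  exact Set.mem_iUnion.2 ⟨l.length, ⟨l.get, e, rfl⟩⟩

lemma mem_SG (l : List (Fin 3)) (e : Fin 3) : Pl q l (q e) ∈ SG q :=
  subset_closure (mem_Vstar q l e)

lemma Pl_mid (l : List (Fin 3)) (i j : Fin 3) :
    Pl q l (Pmap q i (q j)) = Pl q (l ++ [i]) (q j) := by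
  rw [Pl_append]; rfl

lemma mem_SG_mid (l : List (Fin 3)) (i j : Fin 3) :
    Pl q l (Pmap q i (q j)) ∈ SG q := by
  rw [Pl_mid]; exact mem_SG q _ _

lemma harmonic_rule {h : Pt → ℝ} (hh : IsHarmonic q h) (l : List (Fin 3))
    (i j k : Fin 3) (hij : i ≠ j) (hjk : j ≠ k) (hik : i ≠ k) :
    h (Pl q l (Pmap q i (q j))) =
      2/5 * h (Pl q l (q i)) + 2/5 * h (Pl q l (q j)) + 1/5 * h (Pl q l (q k)) := by
  have H := hh.2 l.length l.get i j k hij hjk hik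
  simp only [← Pl_eq_Pw] at H
  exact H

variable {u : Pt → ℝ} {η : ℝ} {a : Fin 3 → ℝ}

/-- The key value formula with geometric defect. -/
lemma star_formula (hu : IsFIF q (fun _ => (1/5 : ℝ)) u)
    (hbd : ∀ i, u (q i) = a i)
    (hval : ∀ i j k : Fin 3, i ≠ j → j ≠ k → i ≠ k →
      u (Pmap q i (q j)) = 1/5 * (2 * a i + 2 * a j + a k - η/3)) :
    ∀ (l : List (Fin 3)) (i j k : Fin 3), i ≠ j → j ≠ k → i ≠ k →
    u (Pl q l (Pmap q i (q j))) =
      2/5 * u (Pl q l (q i)) + 2/5 * u (Pl q l (q j)) + 1/5 * u (Pl q l (q k))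
        - η/15 * (1/5) ^ l.length := by
  obtain ⟨-, h, hharm, hrel⟩ := hu
  intro l
  induction l with
  | nil =>
    intro i j k hij hjk hik
    simp only [Pl_nil, List.length_nil, pow_zero]
    rw [hval i j k hij hjk hik, hbd, hbd, hbd]
    ring
  | cons c l ih =>
    intro i j k hij hjk hik
    rw [Pl_cons, hrel c _ (mem_SG_mid q l i j), ih i j k hij hjk hik,
      harmonic_rule q (hharm c) l i j k hij hjk hik]
    rw [Pl_cons, Pl_cons, Pl_cons, hrel c _ (mem_SG q l i), hrel c _ (mem_SG q l j),
      hrel c _ (mem_SG q l k)]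
    simp only [List.length_cons]
    ring

lemma Pl_corner (τ : List (Fin 3)) (i j : Fin 3) (t : ℕ) :
    Pl q (τ ++ i :: List.replicate t j) (q j) = Pl q τ (Pmap q i (q j)) := by
  rw [Pl_append, Pl_cons, Pl_replicate_self]

/-- The four-neighbor sum at the junction point. -/
lemma Dval (hu : IsFIF q (fun _ => (1/5 : ℝ)) u)
    (hbd : ∀ i, u (q i) = a i)
    (hval : ∀ i j k : Fin 3, i ≠ j → j ≠ k → i ≠ k →
      u (Pmap q i (q j)) = 1/5 * (2 * a i + 2 * a j + a k - η/3))
    (τ : List (Fin 3)) (i j k : Fin 3) (hij : i ≠ j) (hjk : j ≠ k) (hik : i ≠ k) :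
    ∀ t : ℕ,
    u (Pl q (τ ++ i :: List.replicate t j) (q i))
      + u (Pl q (τ ++ i :: List.replicate t j) (q k))
      + u (Pl q (τ ++ j :: List.replicate t i) (q j))
      + u (Pl q (τ ++ j :: List.replicate t i) (q k))
      - 4 * u (Pl q τ (Pmap q i (q j)))
    = 2/3 * η * (1/5) ^ (τ.length + 1 + t) := by
  have star := star_formula q hu hbd hval
  intro t
  induction t with
  | zero =>
    simp only [List.replicate_zero]
    have e1 : ∀ e : Fin 3, Pl q (τ ++ [i] ) (q e) = Pl q τ (Pmap q i (q e)) := by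
      intro e; rw [Pl_append]; rfl
    have e2 : ∀ e : Fin 3, Pl q (τ ++ [j] ) (q e) = Pl q τ (Pmap q j (q e)) := by
      intro e; rw [Pl_append]; rfl
    rw [e1, e1, e2, e2, Pmap_self, Pmap_self,
      star τ i k j hik (Ne.symm hjk) hij,
      star τ j k i hjk (Ne.symm hik) (Ne.symm hij),
      star τ i j k hij hjk hik]
    ring
  | succ t ih =>
    set A := τ ++ i :: List.replicate t j with hAdef
    set B := τ ++ j :: List.replicate t i with hBdef
    have hA1 : τ ++ i :: List.replicate (t+1) j = A ++ [j] := by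
      rw [hAdef, List.replicate_succ',
        show i :: (List.replicate t j ++ [j]) = (i :: List.replicate t j) ++ [j] from rfl,
        ← List.append_assoc]
    have hB1 : τ ++ j :: List.replicate (t+1) i = B ++ [i] := by
      rw [hBdef, List.replicate_succ',
        show j :: (List.replicate t i ++ [i]) = (j :: List.replicate t i) ++ [i] from rfl,
        ← List.append_assoc]
    have hPA : ∀ e : Fin 3, Pl q (A ++ [j]) (q e) = Pl q A (Pmap q j (q e)) := by
      intro e; rw [Pl_append]; rfl
    have hPB : ∀ e : Fin 3, Pl q (B ++ [i]) (q e) = Pl q B (Pmap q i (q e)) := by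
      intro e; rw [Pl_append]; rfl
    have hxA : Pl q A (q j) = Pl q τ (Pmap q i (q j)) := Pl_corner q τ i j t
    have hxB : Pl q B (q i) = Pl q τ (Pmap q i (q j)) := by
      rw [hBdef, Pl_corner, Pmap_comm]
    have hlenA : A.length = τ.length + 1 + t := by
      simp [hAdef]; omega
    have hlenB : B.length = τ.length + 1 + t := by
      simp [hBdef]; omega
    rw [hA1, hB1, hPA, hPA, hPB, hPB,
      star A j i k (Ne.symm hij) hik hjk,
      star A j k i hjk (Ne.symm hik) (Ne.symm hij),
      star B i j k hij hjk hik,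
      star B i k j hik (Ne.symm hjk) hij,
      hlenA, hlenB, hxA, hxB]
    linear_combination (3/5 : ℝ) * ih

end Values

section Main

variable {u : Pt → ℝ} {η : ℝ} {a : Fin 3 → ℝ}

lemma ofFn_get_cast {m : ℕ} (l : List (Fin 3)) (h : m = l.length) :
    List.ofFn (fun r : Fin m => l.get (Fin.cast h r)) = l := by
  subst h
  exact List.ofFn_get l

lemma third_exists : ∀ i j : Fin 3, i ≠ j → ∃ k, i ≠ k ∧ j ≠ k := by decide

lemma third_cases : ∀ i j k p : Fin 3, i ≠ j → j ≠ k → i ≠ k → p ≠ j →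
    p = i ∨ p = k := by decide

/-- The exact value of the level-`m` graph Laplacian. -/
lemma lap_exact (hq : AffineIndependent ℝ q)
    (hu : IsFIF q (fun _ => (1/5 : ℝ)) u)
    (hbd : ∀ i, u (q i) = a i)
    (hval : ∀ i j k : Fin 3, i ≠ j → j ≠ k → i ≠ k →
      u (Pmap q i (q j)) = 1/5 * (2 * a i + 2 * a j + a k - η/3))
    {m : ℕ} {x : Pt} (hx : x ∈ V q m) (hx0 : x ∉ V q 0) :
    graphLap q m u x = 2/3 * η * (1/5) ^ m := by
  classical
  obtain ⟨ω, e, rfl⟩ := hx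
  set x := Pw q m ω (q e) with hxdef
  have hxl : x = Pl q (List.ofFn ω) (q e) := Pw_eq_Pl q m ω (q e)
  have hlen : (List.ofFn ω).length = m := List.length_ofFn
  rcases word_decomp (List.ofFn ω) e with hrep | ⟨τ, i, t, hie, hdec⟩
  · exfalso
    apply hx0
    refine ⟨fun r => r.elim0, e, ?_⟩
    rw [hxl, hrep, Pl_replicate_self]
    rfl
  · -- x is a junction point of the two cells A, B
    obtain ⟨k, hik, hek⟩ := third_exists i e hie
    set A := τ ++ i :: List.replicate t e with hAdef
    set B := τ ++ e :: List.replicate t i with hBdef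
    have hlenA : A.length = m := by rw [← hlen, hdec, hAdef]
    have hlenB : B.length = m := by
      rw [hBdef, ← hlenA, hAdef]
      simp
    have hxA : Pl q A (q e) = x := by rw [hxl, hdec, hAdef]
    have hxτ : Pl q τ (Pmap q i (q e)) = x := by rw [← Pl_corner q τ i e t, hxA]
    have hxB : Pl q B (q i) = x := by
      rw [hBdef, Pl_corner, Pmap_comm, hxτ]
    have hAB : A ≠ B := by
      intro hcon
      rw [hAdef, hBdef] at hcon
      have := List.append_cancel_left hcon
      exact hie (by injection this)
    -- fiber characterization
    have fiber : ∀ (l' : List (Fin 3)) (b : Fin 3), l'.length = m →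
        Pl q l' (q b) = x → (l' = A ∧ b = e) ∨ (l' = B ∧ b = i) := by
      intro l' b hl' hpl
      rcases address_uniq q hq l' A (by rw [hl', hlenA]) b e (by rw [hpl, hxA])
        with ⟨h1, h2⟩ | ⟨τ', i', j', t', hij', e1, e2, e3, e4⟩
      · exact Or.inl ⟨h1, h2⟩
      · -- A = τ' ++ j' :: replicate t' i' with e = i'
        subst e4
        obtain ⟨rfl, rfl, rfl⟩ :=
          decomp_uniq τ τ' i j' e t t' hie (Ne.symm hij') (hAdef.symm.trans e3)
        right
        constructor
        · rw [e1, hBdef]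
        · exact e2
    -- the two words as functions
    set Aw : Fin m → Fin 3 := fun r => A.get (Fin.cast hlenA.symm r) with hAw
    set Bw : Fin m → Fin 3 := fun r => B.get (Fin.cast hlenB.symm r) with hBw
    have hofA : List.ofFn Aw = A := ofFn_get_cast A hlenA.symm
    have hofB : List.ofFn Bw = B := ofFn_get_cast B hlenB.symm
    have hAwBw : Aw ≠ Bw := by
      intro hcon
      exact hAB (by rw [← hofA, ← hofB, hcon])
    have word_eq : ∀ ν : Fin m → Fin 3, List.ofFn ν = A → ν = Aw := by
      intro ν hν
      exact List.ofFn_injective (hν.trans hofA.symm)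
    have word_eq' : ∀ ν : Fin m → Fin 3, List.ofFn ν = B → ν = Bw := by
      intro ν hν
      exact List.ofFn_injective (hν.trans hofB.symm)
    -- the inner sum
    have key : ∀ ν : Fin m → Fin 3, ∀ b : Fin 3, Pw q m ν (q b) = x →
        (ν = Aw ∧ b = e) ∨ (ν = Bw ∧ b = i) := by
      intro ν b hνb
      rw [Pw_eq_Pl] at hνb
      rcases fiber (List.ofFn ν) b List.length_ofFn hνb with ⟨h1, h2⟩ | ⟨h1, h2⟩
      · exact Or.inl ⟨word_eq ν h1, h2⟩
      · exact Or.inr ⟨word_eq' ν h1, h2⟩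
    rw [graphLap]
    rw [← Finset.sum_subset (Finset.subset_univ ({Aw, Bw} : Finset (Fin m → Fin 3)))
      (by
        intro ν _ hν
        simp only [Finset.mem_insert, Finset.mem_singleton, not_or] at hν
        rw [Finset.filter_eq_empty_iff.mpr, Finset.sum_empty]
        intro p _
        rintro ⟨hne, hpe⟩
        rcases key ν p.1 hpe with ⟨h1, -⟩ | ⟨h1, -⟩
        · exact hν.1 h1
        · exact hν.2 h1)]
    rw [Finset.sum_insert (by simpa using hAwBw), Finset.sum_singleton]
    -- compute the two filters
    have hwA : ∀ b, Pw q m Aw (q b) = Pl q A (q b) := by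
      intro b; rw [Pw_eq_Pl, hofA]
    have hwB : ∀ b, Pw q m Bw (q b) = Pl q B (q b) := by
      intro b; rw [Pw_eq_Pl, hofB]
    have filtA : Finset.univ.filter
        (fun p : Fin 3 × Fin 3 => p.1 ≠ p.2 ∧ Pw q m Aw (q p.1) = x)
        = ({(e, i), (e, k)} : Finset (Fin 3 × Fin 3)) := by
      ext p
      simp only [Finset.mem_filter, Finset.mem_univ, true_and, Finset.mem_insert,
        Finset.mem_singleton]
      constructor
      · rintro ⟨hne, hpe⟩
        rcases key Aw p.1 hpe with ⟨-, h2⟩ | ⟨h1, -⟩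
        · rcases third_cases i e k p.2 hie hek hik (h2 ▸ Ne.symm hne) with h | h
          · left; rw [Prod.ext_iff]; exact ⟨h2, h⟩
          · right; rw [Prod.ext_iff]; exact ⟨h2, h⟩
        · exact absurd h1 hAwBw
      · rintro (rfl | rfl)
        · exact ⟨Ne.symm hie, by rw [hwA, hxA]⟩
        · exact ⟨hek, by rw [hwA, hxA]⟩
    have filtB : Finset.univ.filter
        (fun p : Fin 3 × Fin 3 => p.1 ≠ p.2 ∧ Pw q m Bw (q p.1) = x)
        = ({(i, e), (i, k)} : Finset (Fin 3 × Fin 3)) := by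
      ext p
      simp only [Finset.mem_filter, Finset.mem_univ, true_and, Finset.mem_insert,
        Finset.mem_singleton]
      constructor
      · rintro ⟨hne, hpe⟩
        rcases key Bw p.1 hpe with ⟨h1, -⟩ | ⟨-, h2⟩
        · exact absurd h1.symm hAwBw
        · rcases third_cases e i k p.2 (Ne.symm hie) hik hek (h2 ▸ Ne.symm hne) with h | h
          · left; rw [Prod.ext_iff]; exact ⟨h2, h⟩
          · right; rw [Prod.ext_iff]; exact ⟨h2, h⟩
      · rintro (rfl | rfl)
        · exact ⟨hie, by rw [hwB, hxB]⟩
        · exact ⟨hik, by rw [hwB, hxB]⟩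
    rw [filtA, filtB]
    have hne1 : ((e, i) : Fin 3 × Fin 3) ≠ (e, k) := by
      simp [Prod.ext_iff]
      intro h; exact absurd h hik
    have hne2 : ((i, e) : Fin 3 × Fin 3) ≠ (i, k) := by
      simp [Prod.ext_iff]
      intro h; exact absurd h hek
    rw [Finset.sum_insert (by simpa using hne1), Finset.sum_singleton,
      Finset.sum_insert (by simpa using hne2), Finset.sum_singleton]
    simp only [hwA, hwB]
    have hD := Dval q hu hbd hval τ i e k hie hek hik t
    rw [hxτ] at hD
    have hm : τ.length + 1 + t = m := by
      rw [← hlenA, hAdef]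
      simp
      omega
    rw [hm] at hD
    have hux : u x = u x := rfl
    -- rearrange
    linarith [hD]

lemma V_succ_subset (m : ℕ) : V q m ⊆ V q (m + 1) := by
  rintro x ⟨ω, i, rfl⟩
  set l : List (Fin 3) := List.ofFn ω ++ [i] with hldef
  have hl : l.length = m + 1 := by simp [hldef]
  refine ⟨fun r => l.get (Fin.cast hl.symm r), i, ?_⟩
  conv_rhs => rw [Pw_eq_Pl, ofFn_get_cast l hl.symm, hldef, Pl_append, Pl_cons, Pl_nil,
    Pmap_self]
  rw [Pw_eq_Pl]

lemma V_subset {m n : ℕ} (h : m ≤ n) : V q m ⊆ V q n := by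
  induction h with
  | refl => exact fun x hx => hx
  | step h ih => exact fun x hx => V_succ_subset q _ (ih hx)

end Main

end SGaux

/-- the FIF with uniform vertical scaling factor `1/5`, boundary
values `a_i` and `u(P_i(q_j)) = (1/5)(2a_i + 2a_j + a_k - η/3)` has
`(3/2)·5^m·Δ_m u → η` uniformly on `V_* \ V₀`, and in particular `Δu(p) = η`
pointwise.  Here `q 0, q 1, q 2` play the roles of `q₁, q₂, q₃`. -/
theorem stmt_11 (q : Fin 3 → Pt) (hq : AffineIndependent ℝ q)
    (a : Fin 3 → ℝ) (η : ℝ) (u : Pt → ℝ)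
    (hu : IsFIF q (fun _ => (1/5 : ℝ)) u)
    (hbd : ∀ i, u (q i) = a i)
    (hval : ∀ i j k : Fin 3, i ≠ j → j ≠ k → i ≠ k →
      u (Pmap q i (q j)) = 1/5 * (2 * a i + 2 * a j + a k - η/3)) :
    (∀ ε > (0 : ℝ), ∃ N : ℕ, ∀ m ≥ N, ∀ x ∈ V q m \ V q 0,
      |(3/2 : ℝ) * 5^m * graphLap q m u x - η| < ε) ∧
    (∀ p ∈ Vstar q \ V q 0,
      Filter.Tendsto (fun m : ℕ => (3/2 : ℝ) * 5^m * graphLap q m u p)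
        Filter.atTop (nhds η)) := by
  have key : ∀ (m : ℕ) (x : Pt), x ∈ V q m → x ∉ V q 0 →
      (3/2 : ℝ) * 5 ^ m * graphLap q m u x = η := by
    intro m x hxm hx0
    rw [SGaux.lap_exact q hq hu hbd hval hxm hx0,
      show (3/2 : ℝ) * 5 ^ m * (2/3 * η * (1/5) ^ m) = η * (5 * (1/5)) ^ m by
        rw [mul_pow]; ring]
    norm_num
  constructor
  · intro ε hε
    refine ⟨0, fun m _ x hx => ?_⟩
    rw [key m x hx.1 hx.2]
    simpa using hε
  · intro p hp
    obtain ⟨m0, hm0⟩ := Set.mem_iUnion.1 hp.1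
    apply Filter.Tendsto.congr' _ tendsto_const_nhds
    rw [Filter.EventuallyEq, Filter.eventually_atTop]
    exact ⟨m0, fun m hm => (key m p (SGaux.V_subset q hm hm0) hp.2).symm⟩

end
end
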